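/- Let A be a commutative local ring with residue field k, let R be an A-algebra, and let M be a nonzero R-module which is finitely generated as an A-module. If M ⊗_A k is an indecomposable module over R ⊗_A k, then M is an indecomposable R-module. -/

import Mathlib

set_option maxHeartbeats 1000000


open TensorProduct

/-- Let `A` be a commutative local ring with residue field `k`, `R` an `A`-algebra and
`M` a nonzero `R`-module which is finitely generated over `A`.  If `kM = M ⊗_A k` is
indecomposable over `kR` (equivalently, over `R`), then `M` is an indecomposable
`R`-module. -/
theorem stmt6 {A R M : Type*} [CommRing A] [IsLocalRing A] [Ring R] [Algebra A R]
    [AddCommGroup M] [Module R M] [Module A M] [IsScalarTower A R M]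
    [SMulCommClass A R M] [Module.Finite A M] [Nontrivial M]
    (hk : ¬∃ (N₁ N₂ : Submodule R (M ⊗[A] IsLocalRing.ResidueField A)),
      N₁ ≠ ⊥ ∧ N₂ ≠ ⊥ ∧ IsCompl N₁ N₂) :
    ¬∃ (N₁ N₂ : Submodule R M), N₁ ≠ ⊥ ∧ N₂ ≠ ⊥ ∧ IsCompl N₁ N₂ := by
  rintro ⟨N₁, N₂, h1, h2, hcompl⟩
  apply hk
  set k := IsLocalRing.ResidueField A with hkdef
  set 𝔪 := IsLocalRing.maximalIdeal A with h𝔪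
  -- the reduction map `M → M ⊗ k`, as an `R`-linear map
  let f : M →ₗ[R] M ⊗[A] k :=
    { toFun := fun x => x ⊗ₜ (1 : k)
      map_add' := fun x y => add_tmul x y 1
      map_smul' := fun r x => (smul_tmul' r x (1 : k)).symm }
  have hf_apply : ∀ x : M, f x = x ⊗ₜ (1 : k) := fun _ => rfl
  -- elements of 𝔪 • ⊤ are killed by f
  have hker₁ : ∀ x ∈ 𝔪 • (⊤ : Submodule A M), f x = 0 := by
    intro x hx
    refine Submodule.smul_induction_on hx (fun a ha n _ => ?_) (fun y z hy hz => ?_)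
    · have h1 : f (a • n) = n ⊗ₜ (a • (1 : k)) := smul_tmul a n 1
      have h2 : a • (1 : k) = 0 := by
        rw [← Algebra.algebraMap_eq_smul_one, IsLocalRing.ResidueField.algebraMap_eq]
        exact (IsLocalRing.residue_eq_zero_iff a).2 ha
      rw [h1, h2, tmul_zero]
    · rw [map_add, hy, hz, add_zero]
  -- elements killed by f lie in 𝔪 • ⊤
  have hker₂ : ∀ x : M, f x = 0 → x ∈ 𝔪 • (⊤ : Submodule A M) := by
    intro x hx
    let e := TensorProduct.tensorQuotEquivQuotSMul M 𝔪
    have h1 : e.symm (Submodule.Quotient.mk x) = x ⊗ₜ (1 : k) :=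
      TensorProduct.tensorQuotEquivQuotSMul_symm_mk 𝔪 x
    have h2 : e.symm (Submodule.Quotient.mk x) = 0 := by rw [h1]; exact hx
    have h3 : (Submodule.Quotient.mk x : M ⧸ (𝔪 • (⊤ : Submodule A M))) = 0 := by
      have := e.symm.injective (h2.trans (map_zero e.symm).symm)
      exact this
    exact (Submodule.Quotient.mk_eq_zero _).1 h3
  -- decomposition of ⊤ over A
  have htopA : (⊤ : Submodule A M) = N₁.restrictScalars A ⊔ N₂.restrictScalars A := by
    refine le_antisymm (fun x _ => ?_) le_top
    have hx : x ∈ N₁ ⊔ N₂ := by rw [hcompl.sup_eq_top]; trivial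
    obtain ⟨y, hy, z, hz, rfl⟩ := Submodule.mem_sup.1 hx
    exact Submodule.add_mem_sup hy hz
  -- key: if P is a complemented nonzero submodule, then P.map f ≠ ⊥
  have key : ∀ P Q : Submodule R M, IsCompl P Q → P ≠ ⊥ → Submodule.map f P ≠ ⊥ := by
    intro P Q hPQ hP hmap
    -- every element of P lies in 𝔪 • P
    have hle : P.restrictScalars A ≤ 𝔪 • P.restrictScalars A := by
      intro x hx
      have hfx : f x = 0 := by
        have : f x ∈ Submodule.map f P := ⟨x, hx, rfl⟩
        rwa [hmap, Submodule.mem_bot] at this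
      have hxm : x ∈ 𝔪 • (⊤ : Submodule A M) := hker₂ x hfx
      have htopP : (⊤ : Submodule A M) = P.restrictScalars A ⊔ Q.restrictScalars A := by
        refine le_antisymm (fun y _ => ?_) le_top
        have hy : y ∈ P ⊔ Q := by rw [hPQ.sup_eq_top]; trivial
        obtain ⟨u, hu, v, hv, rfl⟩ := Submodule.mem_sup.1 hy
        exact Submodule.add_mem_sup hu hv
      rw [htopP, Submodule.smul_sup] at hxm
      obtain ⟨u, hu, v, hv, huv⟩ := Submodule.mem_sup.1 hxm
      have hu'' : u ∈ P.restrictScalars A := Submodule.smul_le_right hu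
      have hv'' : v ∈ Q.restrictScalars A := Submodule.smul_le_right hv
      have hu' : u ∈ P := hu''
      have hv' : v ∈ Q := hv''
      have heq : x - u = v := by rw [← huv]; abel
      have hPmem : x - u ∈ P := P.sub_mem hx hu'
      have : x - u ∈ P ⊓ Q := ⟨hPmem, heq ▸ hv'⟩
      rw [hPQ.inf_eq_bot, Submodule.mem_bot] at this
      have : x = u := by
        have := sub_eq_zero.1 this
        exact this
      rwa [this]
    -- P is finitely generated over A
    have hfg : (P.restrictScalars A).FG := by
      let π : M →ₗ[A] M :=
        (P.subtype.comp (P.projectionOnto Q hPQ)).restrictScalars A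
      have hrange : Submodule.map π ⊤ = P.restrictScalars A := by
        refine le_antisymm ?_ ?_
        · rintro _ ⟨y, -, rfl⟩
          exact (P.projectionOnto Q hPQ y).2
        · intro x hx
          refine ⟨x, trivial, ?_⟩
          show (P.subtype) (P.projectionOnto Q hPQ x) = x
          rw [Submodule.projectionOnto_apply_left hPQ ⟨x, hx⟩]
          rfl
      have := (Module.Finite.fg_top (R := A) (M := M)).map π
      rwa [hrange] at this
    -- Nakayama
    have hbot : P.restrictScalars A = ⊥ :=
      Submodule.eq_bot_of_le_smul_of_le_jacobson_bot 𝔪 (P.restrictScalars A) hfg hle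
        (IsLocalRing.maximalIdeal_le_jacobson ⊥)
    apply hP
    rw [Submodule.eq_bot_iff] at hbot ⊢
    exact hbot
  -- f is surjective
  have hsurj : Function.Surjective f := by
    intro y
    induction y using TensorProduct.induction_on with
    | zero => exact ⟨0, map_zero f⟩
    | tmul m c =>
      obtain ⟨a, rfl⟩ := IsLocalRing.residue_surjective c
      refine ⟨a • m, ?_⟩
      rw [hf_apply, smul_tmul]
      congr 1
      rw [← Algebra.algebraMap_eq_smul_one, IsLocalRing.ResidueField.algebraMap_eq]
    | add y z hy hz =>
      obtain ⟨x₁, rfl⟩ := hy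
      obtain ⟨x₂, rfl⟩ := hz
      exact ⟨x₁ + x₂, map_add f x₁ x₂⟩
  refine ⟨Submodule.map f N₁, Submodule.map f N₂, key N₁ N₂ hcompl h1,
    key N₂ N₁ hcompl.symm h2, ?_, ?_⟩
  · -- disjoint
    rw [disjoint_iff, Submodule.eq_bot_iff]
    rintro y ⟨⟨x₁, hx₁, rfl⟩, x₂, hx₂, hx₂'⟩
    have hd : f (x₁ - x₂) = 0 := by rw [map_sub, hx₂', sub_self]
    have hxm : x₁ - x₂ ∈ 𝔪 • (⊤ : Submodule A M) := hker₂ _ hd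
    rw [htopA, Submodule.smul_sup] at hxm
    obtain ⟨u, hu, v, hv, huv⟩ := Submodule.mem_sup.1 hxm
    have hu'' : u ∈ N₁.restrictScalars A := Submodule.smul_le_right hu
    have hv'' : v ∈ N₂.restrictScalars A := Submodule.smul_le_right hv
    have hu' : u ∈ N₁ := hu''
    have hv' : v ∈ N₂ := hv''
    have heq : x₁ - u = x₂ + v := by
      have : x₁ - x₂ = u + v := huv.symm
      linear_combination (norm := abel) this
    have hmem : x₁ - u ∈ N₁ ⊓ N₂ := ⟨N₁.sub_mem hx₁ hu', heq ▸ N₂.add_mem hx₂ hv'⟩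
    rw [hcompl.inf_eq_bot, Submodule.mem_bot, sub_eq_zero] at hmem
    have hx₁m : x₁ ∈ 𝔪 • (⊤ : Submodule A M) :=
      Submodule.smul_mono le_rfl le_top (hmem ▸ hu)
    exact hker₁ x₁ hx₁m
  · -- codisjoint
    rw [codisjoint_iff, ← Submodule.map_sup, hcompl.sup_eq_top]
    rw [Submodule.map_top, LinearMap.range_eq_top]
    exact hsurj
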